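/- Existence and uniqueness of the vector-valued Shapley operator: For all positive integers n, m there exists a unique vector-valued value operator Φ : 𝒢ₙᵐ → (ℝᵐ)ⁿ satisfying efficiency, symmetry, dummy, and additivity. Moreover, for every game v ∈ 𝒢ₙᵐ and every player i ∈ {1,…,n}, this operator is given by the permutation formula Φᵢ(v) = (1/n!) Σ_{π ∈ Sₙ} [v(Pᵢ(π) ∪ {i}) − v(Pᵢ(π))] ∈ ℝᵐ, where Sₙ is the set of permutations of [n] and Pᵢ(π) is the set of players preceding i in the permutation π. -/

import Mathlib

open Finset

/-- `preceding n π i` is the set `Pᵢ(π)` of players preceding `i` in the ordering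
given by the permutation `π` of `[n]`. -/
def preceding (n : ℕ) (π : Equiv.Perm (Fin n)) (i : Fin n) : Finset (Fin n) :=
  Finset.univ.filter fun j => π.symm j < π.symm i

/-- The permutation formula for the vector-valued Shapley value:
`Φᵢ(v) = (1/n!) Σ_{π ∈ Sₙ} [v(Pᵢ(π) ∪ {i}) − v(Pᵢ(π))]`. -/
noncomputable def permShap (n m : ℕ) (v : Finset (Fin n) → (Fin m → ℝ)) (i : Fin n) :
    Fin m → ℝ :=
  ((Nat.factorial n : ℝ))⁻¹ •
    ∑ π : Equiv.Perm (Fin n), (v (insert i (preceding n π i)) - v (preceding n π i))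

/-- Efficiency axiom. -/
def IsEfficient (n m : ℕ) (Φ : (Finset (Fin n) → (Fin m → ℝ)) → (Fin n → Fin m → ℝ)) : Prop :=
  ∀ v : Finset (Fin n) → (Fin m → ℝ), v ∅ = 0 → ∑ i : Fin n, Φ v i = v Finset.univ

/-- Symmetry axiom. -/
def IsSymmetric (n m : ℕ) (Φ : (Finset (Fin n) → (Fin m → ℝ)) → (Fin n → Fin m → ℝ)) : Prop :=
  ∀ v : Finset (Fin n) → (Fin m → ℝ), v ∅ = 0 → ∀ i j : Fin n,
    (∀ S : Finset (Fin n), i ∉ S → j ∉ S → v (insert i S) = v (insert j S)) →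
    Φ v i = Φ v j

/-- Dummy (null player) axiom. -/
def IsDummy (n m : ℕ) (Φ : (Finset (Fin n) → (Fin m → ℝ)) → (Fin n → Fin m → ℝ)) : Prop :=
  ∀ v : Finset (Fin n) → (Fin m → ℝ), v ∅ = 0 → ∀ i : Fin n,
    (∀ S : Finset (Fin n), i ∉ S → v (insert i S) = v S) → Φ v i = 0

/-- Additivity axiom. -/
def IsAdditive (n m : ℕ) (Φ : (Finset (Fin n) → (Fin m → ℝ)) → (Fin n → Fin m → ℝ)) : Prop :=
  ∀ v w : Finset (Fin n) → (Fin m → ℝ), v ∅ = 0 → w ∅ = 0 → ∀ α β : ℝ,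
    Φ (α • v + β • w) = α • Φ v + β • Φ w

section Aux
variable {n m : ℕ}

lemma not_mem_preceding (π : Equiv.Perm (Fin n)) (i : Fin n) : i ∉ preceding n π i := by
  simp [preceding]

lemma permShap_telescope (v : Finset (Fin n) → Fin m → ℝ) (hv : v ∅ = 0)
    (π : Equiv.Perm (Fin n)) :
    ∑ i : Fin n, (v (insert i (preceding n π i)) - v (preceding n π i)) = v Finset.univ := by
  set F : ℕ → (Fin m → ℝ) := fun t => v (Finset.univ.filter fun j => (π.symm j : ℕ) < t) with hF
  have h1 : ∀ i : Fin n, preceding n π i = Finset.univ.filter fun j => (π.symm j : ℕ) < (π.symm i : ℕ) := by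
    intro i; rfl
  have h2 : ∀ i : Fin n, insert i (preceding n π i)
      = Finset.univ.filter fun j => (π.symm j : ℕ) < (π.symm i : ℕ) + 1 := by
    intro i
    ext k
    simp only [mem_insert, h1, mem_filter, mem_univ, true_and, Nat.lt_succ_iff,
      le_iff_lt_or_eq]
    constructor
    · rintro (rfl | h)
      · right; rfl
      · left; exact h
    · rintro (h | h)
      · right; exact h
      · left
        have : π.symm k = π.symm i := Fin.val_injective h
        exact π.symm.injective this
  have key : ∀ i : Fin n, v (insert i (preceding n π i)) - v (preceding n π i)
      = F ((π.symm i : ℕ) + 1) - F (π.symm i : ℕ) := by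
    intro i; rw [h2, h1]
  rw [Finset.sum_congr rfl fun i _ => key i]
  have hcomp : (∑ i : Fin n, (F ((π.symm i : ℕ) + 1) - F (π.symm i : ℕ)))
      = ∑ k : Fin n, (F ((k : ℕ) + 1) - F (k : ℕ)) :=
    Equiv.sum_comp π.symm (fun k : Fin n => F ((k : ℕ) + 1) - F (k : ℕ))
  rw [hcomp]
  rw [Fin.sum_univ_eq_sum_range (fun k => F (k + 1) - F k) n]
  rw [Finset.sum_range_sub F]
  have hFn : F n = v Finset.univ := by
    simp only [hF]
    have h : (Finset.univ.filter fun j : Fin n => (π.symm j : ℕ) < n) = Finset.univ :=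
      Finset.filter_true_of_mem fun j _ => (π.symm j).isLt
    rw [h]
  have hF0 : F 0 = 0 := by
    simp only [hF]
    rw [show (Finset.univ.filter fun j : Fin n => (π.symm j : ℕ) < 0) = ∅ by simp, hv]
  rw [hFn, hF0, sub_zero]

lemma permShap_eff : ∀ v : Finset (Fin n) → (Fin m → ℝ), v ∅ = 0 →
    ∑ i : Fin n, permShap n m v i = v Finset.univ := by
  intro v hv
  unfold permShap
  rw [← Finset.smul_sum, Finset.sum_comm]
  rw [Finset.sum_congr rfl fun π _ => permShap_telescope v hv π]
  rw [Finset.sum_const, Finset.card_univ, Fintype.card_perm, Fintype.card_fin]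
  rw [← Nat.cast_smul_eq_nsmul ℝ, smul_smul,
    inv_mul_cancel₀ (by exact_mod_cast Nat.factorial_pos n |>.ne'), one_smul]

lemma permShap_dummy : ∀ v : Finset (Fin n) → (Fin m → ℝ), v ∅ = 0 → ∀ i : Fin n,
    (∀ S : Finset (Fin n), i ∉ S → v (insert i S) = v S) → permShap n m v i = 0 := by
  intro v _ i h
  unfold permShap
  have : ∀ π : Equiv.Perm (Fin n),
      v (insert i (preceding n π i)) - v (preceding n π i) = 0 := by
    intro π; rw [h _ (not_mem_preceding π i), sub_self]
  rw [Finset.sum_congr rfl fun π _ => this π, Finset.sum_const, smul_zero, smul_zero]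

lemma permShap_symm : ∀ v : Finset (Fin n) → (Fin m → ℝ), v ∅ = 0 → ∀ i j : Fin n,
    (∀ S : Finset (Fin n), i ∉ S → j ∉ S → v (insert i S) = v (insert j S)) →
    permShap n m v i = permShap n m v j := by
  intro v _ i j hsym
  rcases eq_or_ne i j with rfl | hij
  · rfl
  unfold permShap
  congr 1
  apply Fintype.sum_bijective (fun π => Equiv.swap i j * π)
    (Group.mulLeft_bijective _)
  intro π
  set P := preceding n π i with hP
  have hPdef : ∀ k, k ∈ P ↔ π.symm k < π.symm i := by
    intro k; simp [hP, preceding]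
  have hiP : i ∉ P := not_mem_preceding π i
  have hP' : ∀ k, k ∈ preceding n (Equiv.swap i j * π) j ↔
      π.symm (Equiv.swap i j k) < π.symm i := by
    intro k
    simp only [preceding, mem_filter, mem_univ, true_and, Equiv.Perm.mul_def,
      Equiv.symm_trans_apply]
    simp only [Equiv.symm_swap, Equiv.swap_apply_right, mem_filter, mem_univ, true_and]
  by_cases hj : j ∈ P
  · have hPeq : preceding n (Equiv.swap i j * π) j = insert i (P.erase j) := by
      ext k
      rw [hP']
      rcases eq_or_ne k i with hki | hki
      · rw [hki, Equiv.swap_apply_left]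
        simp [(hPdef j).mp hj]
      rcases eq_or_ne k j with hkj | hkj
      · rw [hkj, Equiv.swap_apply_right]
        simp [Ne.symm hij, lt_irrefl]
      · rw [Equiv.swap_apply_of_ne_of_ne hki hkj]
        simp [hki, hkj, hPdef k]
    rw [hPeq]
    have h1 : insert j (insert i (P.erase j)) = insert i P := by
      rw [Finset.insert_comm, Finset.insert_erase hj]
    have h2 : v (insert i (P.erase j)) = v P := by
      rw [hsym (P.erase j) (fun h => hiP (Finset.mem_of_mem_erase h))
        (Finset.notMem_erase j P), Finset.insert_erase hj]
    rw [h1, h2]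
  · have hPeq : preceding n (Equiv.swap i j * π) j = P := by
      ext k
      rw [hP']
      rcases eq_or_ne k i with hki | hki
      · rw [hki, Equiv.swap_apply_left]
        simp [hiP, (hPdef j).not.mp hj]
      rcases eq_or_ne k j with hkj | hkj
      · rw [hkj, Equiv.swap_apply_right]
        simp [hj, lt_irrefl]
      · rw [Equiv.swap_apply_of_ne_of_ne hki hkj, hPdef k]
    rw [hPeq, hsym P hiP hj]

lemma permShap_add : ∀ v w : Finset (Fin n) → (Fin m → ℝ), v ∅ = 0 → w ∅ = 0 → ∀ α β : ℝ,
    (fun i => permShap n m (α • v + β • w) i)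
      = α • (fun i => permShap n m v i) + β • (fun i => permShap n m w i) := by
  intro v w _ _ α β
  funext i
  simp only [Pi.add_apply, Pi.smul_apply]
  unfold permShap
  rw [smul_comm α, smul_comm β, ← smul_add]
  congr 1
  rw [Finset.smul_sum, Finset.smul_sum, ← Finset.sum_add_distrib]
  apply Finset.sum_congr rfl
  intro π _
  simp only [Pi.add_apply, Pi.smul_apply]
  module

end Aux

section Uniq
variable {n m : ℕ}

noncomputable def coeff (v : Finset (Fin n) → Fin m → ℝ) (T : Finset (Fin n)) : Fin m → ℝ :=
  ∑ B ∈ T.powerset, ((-1 : ℝ)) ^ (T.card - B.card) • v B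

noncomputable def basisGame (T : Finset (Fin n)) (c : Fin m → ℝ) :
    Finset (Fin n) → Fin m → ℝ :=
  fun S => if T ⊆ S then c else 0

lemma alt_sum_real {α : Type*} [DecidableEq α] (x : Finset α) :
    (∑ U ∈ x.powerset, ((-1 : ℝ)) ^ U.card) = if x = ∅ then 1 else 0 := by
  have h := Finset.sum_powerset_neg_one_pow_card (x := x)
  have h2 := congrArg (fun z : ℤ => (z : ℝ)) h
  push_cast [apply_ite (fun z : ℤ => (z : ℝ))] at h2
  convert h2 using 2 <;> simp

lemma inner_alt (S B : Finset (Fin n)) (hB : B ⊆ S) :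
    (∑ T ∈ S.powerset.filter (fun T => B ⊆ T), ((-1 : ℝ)) ^ (T.card - B.card))
      = if B = S then 1 else 0 := by
  have key : (∑ T ∈ S.powerset.filter (fun T => B ⊆ T), ((-1 : ℝ)) ^ (T.card - B.card))
      = ∑ U ∈ (S \ B).powerset, ((-1 : ℝ)) ^ U.card := by
    apply Finset.sum_nbij' (fun T => T \ B) (fun U => B ∪ U)
    · intro T hT
      simp only [Finset.mem_filter, Finset.mem_powerset] at hT
      exact Finset.mem_powerset.mpr (Finset.sdiff_subset_sdiff hT.1 le_rfl)
    · intro U hU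
      simp only [Finset.mem_powerset] at hU
      simp only [Finset.mem_filter, Finset.mem_powerset]
      exact ⟨Finset.union_subset hB (hU.trans Finset.sdiff_subset), Finset.subset_union_left⟩
    · intro T hT
      simp only [Finset.mem_filter, Finset.mem_powerset] at hT
      rw [Finset.union_sdiff_of_subset hT.2]
    · intro U hU
      simp only [Finset.mem_powerset] at hU
      rw [Finset.union_sdiff_cancel_left]
      exact (Finset.disjoint_sdiff.mono_right hU).symm.symm
    · intro T hT
      simp only [Finset.mem_filter, Finset.mem_powerset] at hT
      rw [Finset.card_sdiff_of_subset hT.2]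
  rw [key, alt_sum_real]
  by_cases h : B = S
  · rw [if_pos h, if_pos (by rw [Finset.sdiff_eq_empty_iff_subset, h])]
  · rw [if_neg h, if_neg (by
      rw [Finset.sdiff_eq_empty_iff_subset]
      intro hSB; exact h (Finset.Subset.antisymm hB hSB))]

lemma mobius (v : Finset (Fin n) → Fin m → ℝ) (hv : v ∅ = 0) (S : Finset (Fin n)) :
    ∑ T ∈ S.powerset, coeff v T = v S := by
  unfold coeff
  have step1 : ∑ T ∈ S.powerset, ∑ B ∈ T.powerset, ((-1 : ℝ)) ^ (T.card - B.card) • v B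
      = ∑ T ∈ S.powerset, ∑ B ∈ S.powerset,
          if B ⊆ T then ((-1 : ℝ)) ^ (T.card - B.card) • v B else 0 := by
    apply Finset.sum_congr rfl
    intro T hT
    rw [← Finset.sum_filter]
    congr 1
    ext B
    simp only [Finset.mem_powerset, Finset.mem_filter]
    exact ⟨fun h => ⟨h.trans (Finset.mem_powerset.mp hT), h⟩, fun h => h.2⟩
  rw [step1, Finset.sum_comm]
  have step2 : ∀ B ∈ S.powerset,
      (∑ T ∈ S.powerset, if B ⊆ T then ((-1 : ℝ)) ^ (T.card - B.card) • v B else 0)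
        = (if B = S then (1 : ℝ) else 0) • v B := by
    intro B hB
    rw [← Finset.sum_filter, ← Finset.sum_smul, inner_alt S B (Finset.mem_powerset.mp hB)]
  rw [Finset.sum_congr rfl step2]
  have step3 : ∀ B ∈ S.powerset, (if B = S then (1 : ℝ) else 0) • v B
      = if B = S then v B else 0 := by
    intro B _
    split <;> simp
  rw [Finset.sum_congr rfl step3, Finset.sum_ite_eq' S.powerset S v,
    if_pos (Finset.mem_powerset.mpr Finset.Subset.rfl)]

lemma decomposition (v : Finset (Fin n) → Fin m → ℝ) (hv : v ∅ = 0) :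
    v = ∑ T ∈ (Finset.univ : Finset (Fin n)).powerset, basisGame T (coeff v T) := by
  funext S
  rw [Finset.sum_apply]
  have : ∀ T ∈ (Finset.univ : Finset (Fin n)).powerset,
      basisGame T (coeff v T) S = if T ⊆ S then coeff v T else 0 := fun T _ => rfl
  rw [Finset.sum_congr rfl this,
    ← Finset.sum_subset (Finset.powerset_mono.mpr (Finset.subset_univ S))
      (fun T _ hT => if_neg (fun hsub => hT (Finset.mem_powerset.mpr hsub))),
    Finset.sum_congr rfl (fun T hT => if_pos (Finset.mem_powerset.mp hT)),
    mobius v hv S]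

lemma basisGame_empty (T : Finset (Fin n)) (c : Fin m → ℝ) (hT : T.Nonempty) :
    basisGame T c ∅ = 0 := by
  unfold basisGame
  rw [if_neg]
  intro h
  exact hT.ne_empty (Finset.subset_empty.mp h)

lemma basis_val (Φ : (Finset (Fin n) → (Fin m → ℝ)) → (Fin n → Fin m → ℝ))
    (hE : IsEfficient n m Φ) (hS : IsSymmetric n m Φ) (hD : IsDummy n m Φ)
    (T : Finset (Fin n)) (hT : T.Nonempty) (c : Fin m → ℝ) (i : Fin n) :
    Φ (basisGame T c) i = if i ∈ T then ((T.card : ℝ))⁻¹ • c else 0 := by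
  have h0 : basisGame T c ∅ = 0 := basisGame_empty T c hT
  by_cases hi : i ∈ T
  · -- symmetric among members of T
    have hsymm : ∀ j ∈ T, Φ (basisGame T c) j = Φ (basisGame T c) i := by
      intro j hj
      rcases eq_or_ne j i with rfl | hji
      · rfl
      apply hS (basisGame T c) h0 j i
      intro S hjS hiS
      unfold basisGame
      have h1 : ¬ T ⊆ insert j S := by
        intro h
        rcases Finset.mem_insert.mp (h hi) with h' | h'
        · exact hji h'.symm
        · exact hiS h'
      have h2 : ¬ T ⊆ insert i S := by
        intro h
        rcases Finset.mem_insert.mp (h hj) with h' | h'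
        · exact hji h'
        · exact hjS h'
      rw [if_neg h1, if_neg h2]
    have hdum : ∀ j : Fin n, j ∉ T → Φ (basisGame T c) j = 0 := by
      intro j hj
      apply hD (basisGame T c) h0 j
      intro S hjS
      unfold basisGame
      simp only [Finset.subset_insert_iff_of_notMem hj]
    have heff := hE (basisGame T c) h0
    have hsum : ∑ j : Fin n, Φ (basisGame T c) j = (T.card : ℕ) • Φ (basisGame T c) i := by
      rw [← Finset.sum_subset (Finset.subset_univ T)]
      · rw [Finset.sum_congr rfl hsymm, Finset.sum_const]
      · intro j _ hj; exact hdum j hj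
    have huniv : basisGame T c Finset.univ = c := by
      unfold basisGame; rw [if_pos (Finset.subset_univ T)]
    rw [heff, huniv] at hsum
    have hcard : (T.card : ℝ) ≠ 0 := by
      exact_mod_cast (Finset.card_pos.mpr hT).ne'
    rw [if_pos hi, eq_inv_smul_iff₀ hcard, Nat.cast_smul_eq_nsmul ℝ]
    exact hsum.symm
  · rw [if_neg hi]
    apply hD (basisGame T c) h0 i
    intro S hiS
    unfold basisGame
    simp only [Finset.subset_insert_iff_of_notMem hi]

lemma phi_zero (Φ : (Finset (Fin n) → (Fin m → ℝ)) → (Fin n → Fin m → ℝ))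
    (hA : IsAdditive n m Φ) : Φ 0 = 0 := by
  have h := hA 0 0 rfl rfl 0 0
  simpa using h

lemma phi_add (Φ : (Finset (Fin n) → (Fin m → ℝ)) → (Fin n → Fin m → ℝ))
    (hA : IsAdditive n m Φ) (v w : Finset (Fin n) → Fin m → ℝ)
    (hv : v ∅ = 0) (hw : w ∅ = 0) : Φ (v + w) = Φ v + Φ w := by
  have h := hA v w hv hw 1 1
  simpa using h

lemma phi_sum {ι : Type*} (Φ : (Finset (Fin n) → (Fin m → ℝ)) → (Fin n → Fin m → ℝ))
    (hA : IsAdditive n m Φ) (s : Finset ι) (f : ι → Finset (Fin n) → Fin m → ℝ)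
    (hf : ∀ t ∈ s, f t ∅ = 0) :
    Φ (∑ t ∈ s, f t) = ∑ t ∈ s, Φ (f t) := by
  classical
  induction s using Finset.cons_induction with
  | empty => simpa using phi_zero Φ hA
  | cons a s ha ih =>
    rw [Finset.sum_cons, Finset.sum_cons]
    rw [phi_add Φ hA _ _ (hf a (Finset.mem_cons_self a s)) (by
      rw [Finset.sum_apply]
      exact Finset.sum_eq_zero fun t ht => hf t (Finset.mem_cons_of_mem ht))]
    rw [ih fun t ht => hf t (Finset.mem_cons_of_mem ht)]

lemma coeff_empty (v : Finset (Fin n) → Fin m → ℝ) (hv : v ∅ = 0) :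
    coeff v ∅ = 0 := by
  unfold coeff
  simp [hv]

lemma uniq_formula (Φ : (Finset (Fin n) → (Fin m → ℝ)) → (Fin n → Fin m → ℝ))
    (hE : IsEfficient n m Φ) (hS : IsSymmetric n m Φ) (hD : IsDummy n m Φ)
    (hA : IsAdditive n m Φ) (v : Finset (Fin n) → Fin m → ℝ) (hv : v ∅ = 0) (i : Fin n) :
    Φ v i = ∑ T ∈ (Finset.univ : Finset (Fin n)).powerset,
      (if i ∈ T then ((T.card : ℝ))⁻¹ • coeff v T else 0) := by
  have hf : ∀ T ∈ (Finset.univ : Finset (Fin n)).powerset,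
      basisGame T (coeff v T) (∅ : Finset (Fin n)) = 0 := by
    intro T _
    rcases T.eq_empty_or_nonempty with rfl | hT
    · unfold basisGame
      rw [coeff_empty v hv]
      split <;> rfl
    · exact basisGame_empty T _ hT
  conv_lhs => rw [decomposition v hv]
  rw [phi_sum Φ hA _ _ hf]
  rw [Finset.sum_apply]
  apply Finset.sum_congr rfl
  intro T _
  rcases T.eq_empty_or_nonempty with rfl | hT
  · have : basisGame (∅ : Finset (Fin n)) (coeff v ∅) = 0 := by
      funext S
      unfold basisGame
      rw [coeff_empty v hv]
      split <;> rfl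
    rw [this, phi_zero Φ hA]
    simp
  · rw [basis_val Φ hE hS hD T hT (coeff v T) i]

end Uniq

/-- **Existence and uniqueness of the vector-valued Shapley operator.**
There exists a vector-valued value operator satisfying efficiency, symmetry, dummy, and
additivity, given on every game by the permutation formula; moreover any operator
satisfying the four axioms coincides with the permutation formula on every game. -/
theorem vector_valued_Shapley_existence_uniqueness (n m : ℕ) (hn : 0 < n) (hm : 0 < m) :
    (∃ Φ : (Finset (Fin n) → (Fin m → ℝ)) → (Fin n → Fin m → ℝ),
      IsEfficient n m Φ ∧ IsSymmetric n m Φ ∧ IsDummy n m Φ ∧ IsAdditive n m Φ ∧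
      ∀ v : Finset (Fin n) → (Fin m → ℝ), v ∅ = 0 →
        ∀ i : Fin n, Φ v i = permShap n m v i) ∧
    (∀ Φ : (Finset (Fin n) → (Fin m → ℝ)) → (Fin n → Fin m → ℝ),
      IsEfficient n m Φ → IsSymmetric n m Φ → IsDummy n m Φ → IsAdditive n m Φ →
      ∀ v : Finset (Fin n) → (Fin m → ℝ), v ∅ = 0 →
        ∀ i : Fin n, Φ v i = permShap n m v i) := by
  constructor
  · refine ⟨permShap n m, permShap_eff, permShap_symm, permShap_dummy, ?_, fun v hv i => rfl⟩
    intro v w hv hw α β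
    exact permShap_add v w hv hw α β
  · intro Φ hE hS hD hA v hv i
    rw [uniq_formula Φ hE hS hD hA v hv i,
      ← uniq_formula (permShap n m) permShap_eff permShap_symm permShap_dummy
        (fun v w hv hw α β => permShap_add v w hv hw α β) v hv i]
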